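/- Let B : 𝓚 → 𝓗 be bounded and assume every nonreal λ ∈ ℂ belongs to ρ(A_B) and every nonreal μ̃ ∈ ℂ belongs to ρ(Ã_{B*}). Fix f ∈ 𝓗 and w ∈ 𝓚. Then the following are equivalent: (a) the restrictions of λ ↦ ⟨M_B(λ)f, w⟩_𝓚 to the upper half-plane ℂ₊ and to the lower half-plane ℂ₋ belong to the Nevanlinna classes N(ℂ₊) and N(ℂ₋) respectively; (b) for every μ ∈ ρ(A_B) and every μ̃ ∈ ρ(Ã_{B*}), the restrictions of λ ↦ ⟨(A_B−λ)⁻¹S_{μ,B}f, S̃_{μ̃,B*}w⟩_H to ℂ₊ and to ℂ₋ belong to N(ℂ₊) and N(ℂ₋) respectively. -/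

import Mathlib

open scoped InnerProductSpace

noncomputable section

/-- `R` is the (bounded, everywhere-defined) resolvent of the restriction `A_B` of `T`
to `{u ∈ dT : Γ1 u = B (Γ2 u)}` at the spectral parameter `lam`. -/
structure IsResolventAt {H E F : Type*}
    [NormedAddCommGroup H] [InnerProductSpace ℂ H]
    [NormedAddCommGroup E] [InnerProductSpace ℂ E]
    [NormedAddCommGroup F] [InnerProductSpace ℂ F]
    (dT : Submodule ℂ H) (T : ↥dT →ₗ[ℂ] H)
    (Γ1 : ↥dT →ₗ[ℂ] E) (Γ2 : ↥dT →ₗ[ℂ] F)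
    (B : F →L[ℂ] E) (lam : ℂ) (R : H →L[ℂ] H) : Prop where
  mem : ∀ y : H, R y ∈ dT
  bc : ∀ y : H, Γ1 ⟨R y, mem y⟩ = B (Γ2 ⟨R y, mem y⟩)
  right_inv : ∀ y : H, T ⟨R y, mem y⟩ - lam • R y = y
  left_inv : ∀ u : ↥dT, Γ1 u = B (Γ2 u) → R (T u - lam • (u : H)) = (u : H)

/-- `S` is the solution operator `S_{lam,B}`: it maps `f` to the unique element of
`ker (T - lam)` with `(Γ1 - B Γ2) (S f) = f`. -/
structure IsSolOp {H E F : Type*}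
    [NormedAddCommGroup H] [InnerProductSpace ℂ H]
    [NormedAddCommGroup E] [InnerProductSpace ℂ E]
    [NormedAddCommGroup F] [InnerProductSpace ℂ F]
    (dT : Submodule ℂ H) (T : ↥dT →ₗ[ℂ] H)
    (Γ1 : ↥dT →ₗ[ℂ] E) (Γ2 : ↥dT →ₗ[ℂ] F)
    (B : F →L[ℂ] E) (lam : ℂ) (S : E →ₗ[ℂ] ↥dT) : Prop where
  in_ker : ∀ f : E, T (S f) = lam • ((S f : H))
  trace : ∀ f : E, Γ1 (S f) - B (Γ2 (S f)) = f
  inv : ∀ u : ↥dT, T u = lam • (u : H) → S (Γ1 u - B (Γ2 u)) = u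

/-- `F` belongs to the Nevanlinna class `N(Ω)`: it is the quotient of two bounded analytic
functions on `Ω` (with nonvanishing denominator somewhere, i.e. denominator not identically
zero). -/
def NevClass (Ω : Set ℂ) (F : ℂ → ℂ) : Prop :=
  ∃ g h : ℂ → ℂ,
    DifferentiableOn ℂ g Ω ∧ DifferentiableOn ℂ h Ω ∧
    (∃ Cg : ℝ, ∀ z ∈ Ω, ‖g z‖ ≤ Cg) ∧
    (∃ Ch : ℝ, ∀ z ∈ Ω, ‖h z‖ ≤ Ch) ∧
    (∃ z ∈ Ω, h z ≠ 0) ∧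
    ∀ z ∈ Ω, F z * h z = g z


/-- Auxiliary: boundedness of a complex-valued function on a set. -/
def BddOn (Ω : Set ℂ) (p : ℂ → ℂ) : Prop := ∃ C : ℝ, ∀ z ∈ Ω, ‖p z‖ ≤ C

lemma BddOn.mul {Ω : Set ℂ} {p q : ℂ → ℂ} (hp : BddOn Ω p) (hq : BddOn Ω q) :
    BddOn Ω (fun z => p z * q z) := by
  obtain ⟨Cp, hp⟩ := hp; obtain ⟨Cq, hq⟩ := hq
  refine ⟨|Cp| * |Cq|, fun z hz => ?_⟩
  rw [norm_mul]
  exact mul_le_mul ((hp z hz).trans (le_abs_self _)) ((hq z hz).trans (le_abs_self _))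
    (norm_nonneg _) (abs_nonneg _)

lemma BddOn.sub {Ω : Set ℂ} {p q : ℂ → ℂ} (hp : BddOn Ω p) (hq : BddOn Ω q) :
    BddOn Ω (fun z => p z - q z) := by
  obtain ⟨Cp, hp⟩ := hp; obtain ⟨Cq, hq⟩ := hq
  refine ⟨Cp + Cq, fun z hz => ?_⟩
  calc ‖p z - q z‖ ≤ ‖p z‖ + ‖q z‖ := by
        simpa [sub_eq_add_neg] using norm_add_le (p z) (-q z)
    _ ≤ Cp + Cq := add_le_add (hp z hz) (hq z hz)

lemma BddOn.const {Ω : Set ℂ} (c : ℂ) : BddOn Ω (fun _ => c) :=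
  ⟨‖c‖, fun _ _ => le_rfl⟩

lemma bdd_lin {s a z : ℂ} (h1 : (1:ℝ) ≤ ‖z - s‖) :
    ‖(z - a) * (z - s)⁻¹‖ ≤ 1 + ‖s - a‖ := by
  have hne : z - s ≠ 0 := by
    intro h; rw [h] at h1; simp at h1; linarith
  have he : (z - a) * (z - s)⁻¹ = 1 + (s - a) * (z - s)⁻¹ := by
    field_simp
    ring
  rw [he]
  have h2 : ‖(s - a) * (z - s)⁻¹‖ ≤ ‖s - a‖ := by
    rw [norm_mul, norm_inv]
    calc ‖s - a‖ * (‖z - s‖)⁻¹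
        ≤ ‖s - a‖ * 1 := by
          refine mul_le_mul_of_nonneg_left ?_ (norm_nonneg _)
          exact inv_le_one_of_one_le₀ h1
      _ = _ := mul_one _
  calc ‖1 + (s - a) * (z - s)⁻¹‖
      ≤ ‖(1:ℂ)‖ + ‖(s - a) * (z - s)⁻¹‖ := norm_add_le _ _
    _ ≤ 1 + ‖s - a‖ := by simpa using h2

lemma exists_near {Ω : Set ℂ} (hΩ : IsOpen Ω)
    (htr : ∀ z ∈ Ω, ∀ t : ℝ, z + (t:ℂ) ∈ Ω)
    {h : ℂ → ℂ} (hc : ContinuousOn h Ω) {z₀ : ℂ} (hz₀ : z₀ ∈ Ω) (hh : h z₀ ≠ 0)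
    (a b : ℂ) : ∃ z ∈ Ω, z ≠ a ∧ z ≠ b ∧ h z ≠ 0 := by
  have hca : ContinuousAt h z₀ := hc.continuousAt (hΩ.mem_nhds hz₀)
  have hev : ∀ᶠ z in nhds z₀, h z ≠ 0 := hca.eventually_ne hh
  rcases Metric.eventually_nhds_iff.mp hev with ⟨ε, hε, hball⟩
  have hinf : ((Set.Ioo (0:ℝ) ε) \ {(a - z₀).re, (b - z₀).re}).Infinite :=
    (Set.Ioo_infinite hε).diff (Set.toFinite _)
  obtain ⟨t, ht⟩ := hinf.nonempty
  obtain ⟨⟨ht0, htε⟩, htne⟩ := ht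
  refine ⟨z₀ + (t:ℂ), htr _ hz₀ t, ?_, ?_, ?_⟩
  · intro heq
    apply htne
    have h3 : (t:ℂ) = a - z₀ := by linear_combination heq
    have h4 := congrArg Complex.re h3
    simp at h4
    simp [h4]
  · intro heq
    apply htne
    have h3 : (t:ℂ) = b - z₀ := by linear_combination heq
    have h4 := congrArg Complex.re h3
    simp at h4
    simp [h4]
  · apply hball
    rw [Complex.dist_eq]
    simpa [abs_of_pos ht0] using htε

lemma nev_transfer (Ω : Set ℂ) (hΩ : IsOpen Ω) (s : ℂ)
    (hs : ∀ z ∈ Ω, (1:ℝ) ≤ ‖z - s‖)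
    (htr : ∀ z ∈ Ω, ∀ t : ℝ, z + (t:ℂ) ∈ Ω)
    (a b c k : ℂ) (F G : ℂ → ℂ)
    (hid : ∀ z ∈ Ω, G z * ((z - a) * (z - b)) = c - (z - b) * k - F z) :
    NevClass Ω F ↔ NevClass Ω G := by
  have hne : ∀ z ∈ Ω, z - s ≠ 0 := by
    intro z hz h
    have h2 := hs z hz
    rw [h] at h2; simp at h2; linarith
  have hφd : DifferentiableOn ℂ (fun z => (z - s)⁻¹) Ω :=
    ((differentiable_id.sub_const s).differentiableOn).inv hne
  have hφb : BddOn Ω (fun z => (z - s)⁻¹) := by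
    refine ⟨1, fun z hz => ?_⟩
    rw [norm_inv]
    exact inv_le_one_of_one_le₀ (hs z hz)
  have hlind : ∀ a' : ℂ, DifferentiableOn ℂ (fun z => (z - a') * (z - s)⁻¹) Ω :=
    fun a' => ((differentiable_id.sub_const a').differentiableOn).mul hφd
  have hlinb : ∀ a' : ℂ, BddOn Ω (fun z => (z - a') * (z - s)⁻¹) :=
    fun a' => ⟨1 + ‖s - a'‖, fun z hz => bdd_lin (hs z hz)⟩
  have hQd : DifferentiableOn ℂ (fun z => (c - (z - b) * k) * (z - s)⁻¹) Ω := by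
    exact (((differentiableOn_const c).sub
      (((differentiable_id.sub_const b).differentiableOn).mul (differentiableOn_const k)))).mul hφd
  have hQb : BddOn Ω (fun z => (c - (z - b) * k) * (z - s)⁻¹) := by
    have h5 : ∀ z : ℂ, (c - (z - b) * k) * (z - s)⁻¹
        = c * (z - s)⁻¹ - ((z - b) * (z - s)⁻¹) * k := by intro z; ring
    simp only [h5]
    exact ((BddOn.const c).mul hφb).sub ((hlinb b).mul (BddOn.const k))
  constructor
  · rintro ⟨g, h, hgd, hhd, hCg, hCh, ⟨z₀, hz₀, hh0⟩, hFh⟩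
    refine ⟨fun z => ((c - (z - b) * k) * (z - s)⁻¹) * ((z - s)⁻¹ * h z)
        - g z * ((z - s)⁻¹ * (z - s)⁻¹),
      fun z => ((z - a) * (z - s)⁻¹) * (((z - b) * (z - s)⁻¹) * h z), ?_, ?_, ?_, ?_, ?_, ?_⟩
    · exact (hQd.mul (hφd.mul hhd)).sub (hgd.mul (hφd.mul hφd))
    · exact (hlind a).mul ((hlind b).mul hhd)
    · exact (hQb.mul (hφb.mul hCh)).sub (BddOn.mul hCg (hφb.mul hφb))
    · exact (hlinb a).mul ((hlinb b).mul hCh)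
    · obtain ⟨z₁, hz₁, hza, hzb, hh1⟩ := exists_near hΩ htr hhd.continuousOn hz₀ hh0 a b
      refine ⟨z₁, hz₁, ?_⟩
      exact mul_ne_zero (mul_ne_zero (sub_ne_zero.mpr hza) (inv_ne_zero (hne z₁ hz₁)))
        (mul_ne_zero (mul_ne_zero (sub_ne_zero.mpr hzb) (inv_ne_zero (hne z₁ hz₁))) hh1)
    · intro z hz
      have e1 := hid z hz
      have e2 := hFh z hz
      linear_combination ((z - s)⁻¹ * (z - s)⁻¹ * h z) * e1 - ((z - s)⁻¹ * (z - s)⁻¹) * e2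
  · rintro ⟨g, h, hgd, hhd, hCg, hCh, ⟨z₀, hz₀, hh0⟩, hGh⟩
    refine ⟨fun z => ((c - (z - b) * k) * (z - s)⁻¹) * ((z - s)⁻¹ * h z)
        - g z * (((z - a) * (z - s)⁻¹) * ((z - b) * (z - s)⁻¹)),
      fun z => (z - s)⁻¹ * ((z - s)⁻¹ * h z), ?_, ?_, ?_, ?_, ?_, ?_⟩
    · exact (hQd.mul (hφd.mul hhd)).sub (hgd.mul ((hlind a).mul (hlind b)))
    · exact hφd.mul (hφd.mul hhd)
    · exact (hQb.mul (hφb.mul hCh)).sub (BddOn.mul hCg ((hlinb a).mul (hlinb b)))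
    · exact hφb.mul (hφb.mul hCh)
    · exact ⟨z₀, hz₀, mul_ne_zero (inv_ne_zero (hne z₀ hz₀))
        (mul_ne_zero (inv_ne_zero (hne z₀ hz₀)) hh0)⟩
    · intro z hz
      have e1 := hid z hz
      have e2 := hGh z hz
      linear_combination ((z - s)⁻¹ * (z - s)⁻¹ * h z) * e1
        - ((z - a) * (z - b) * ((z - s)⁻¹ * (z - s)⁻¹)) * e2

/-- Assuming all nonreal points lie in `ρ(A_B)` and `ρ(Ã_{B*})`:
the matrix elements of the M-function are of Nevanlinna class on both half-planes iff,
for every `μ ∈ ρ(A_B)` and `μ̃ ∈ ρ(Ã_{B*})`, the corresponding bordered-resolvent matrix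
elements are of Nevanlinna class on both half-planes. -/
theorem statement_9
    {H 𝓗 𝓚 : Type*}
    [NormedAddCommGroup H] [InnerProductSpace ℂ H] [CompleteSpace H]
    [NormedAddCommGroup 𝓗] [InnerProductSpace ℂ 𝓗] [CompleteSpace 𝓗]
    [NormedAddCommGroup 𝓚] [InnerProductSpace ℂ 𝓚] [CompleteSpace 𝓚]
    (dT dT' : Submodule ℂ H)
    (T : ↥dT →ₗ[ℂ] H) (T' : ↥dT' →ₗ[ℂ] H)
    (Γ1 : ↥dT →ₗ[ℂ] 𝓗) (Γ2 : ↥dT →ₗ[ℂ] 𝓚)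
    (Γt1 : ↥dT' →ₗ[ℂ] 𝓚) (Γt2 : ↥dT' →ₗ[ℂ] 𝓗)
    (green : ∀ (u : ↥dT) (v : ↥dT'),
      ⟪(v : H), T u⟫_ℂ - ⟪T' v, (u : H)⟫_ℂ
        = ⟪Γt2 v, Γ1 u⟫_ℂ - ⟪Γt1 v, Γ2 u⟫_ℂ)
    (B : 𝓚 →L[ℂ] 𝓗)
    (res rest : Set ℂ)
    (hres : res = {lam : ℂ | ∃ R : H →L[ℂ] H, IsResolventAt dT T Γ1 Γ2 B lam R})
    (hrest : rest = {μt : ℂ | ∃ Rt : H →L[ℂ] H,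
      IsResolventAt dT' T' Γt1 Γt2 (ContinuousLinearMap.adjoint B) μt Rt})
    (hallres : ∀ lam : ℂ, lam.im ≠ 0 → lam ∈ res)
    (hallrest : ∀ μt : ℂ, μt.im ≠ 0 → μt ∈ rest)
    (R : ℂ → H →L[ℂ] H)
    (hR : ∀ lam ∈ res, IsResolventAt dT T Γ1 Γ2 B lam (R lam))
    (S : ℂ → 𝓗 →ₗ[ℂ] ↥dT)
    (hS : ∀ lam ∈ res, IsSolOp dT T Γ1 Γ2 B lam (S lam))
    (St : ℂ → 𝓚 →ₗ[ℂ] ↥dT')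
    (hSt : ∀ μt ∈ rest,
      IsSolOp dT' T' Γt1 Γt2 (ContinuousLinearMap.adjoint B) μt (St μt))
    (f : 𝓗) (w : 𝓚) :
    (NevClass {z : ℂ | 0 < z.im} (fun lam => ⟪w, Γ2 (S lam f)⟫_ℂ)
        ∧ NevClass {z : ℂ | z.im < 0} (fun lam => ⟪w, Γ2 (S lam f)⟫_ℂ))
      ↔ ∀ μ ∈ res, ∀ μt ∈ rest,
          NevClass {z : ℂ | 0 < z.im}
            (fun lam => ⟪((St μt w : H)), R lam ((S μ f : H))⟫_ℂ)
          ∧ NevClass {z : ℂ | z.im < 0}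
            (fun lam => ⟪((St μt w : H)), R lam ((S μ f : H))⟫_ℂ) := by

  -- Green identity consequence
  have green' : ∀ μt ∈ rest, ∀ z ∈ res,
      (z - (starRingEnd ℂ) μt) * ⟪((St μt w : H)), ((S z f : H))⟫_ℂ
        = ⟪Γt2 (St μt w), f⟫_ℂ - ⟪w, Γ2 (S z f)⟫_ℂ := by
    intro μt hμt z hz
    have hSz := hS z hz
    have hStm := hSt μt hμt
    have hg := green (S z f) (St μt w)
    rw [hSz.in_ker f, hStm.in_ker w, inner_smul_right, inner_smul_left] at hg
    have h1 : Γ1 (S z f) = f + B (Γ2 (S z f)) := sub_eq_iff_eq_add.mp (hSz.trace f)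
    have h2 : Γt1 (St μt w) = w + (ContinuousLinearMap.adjoint B) (Γt2 (St μt w)) :=
      sub_eq_iff_eq_add.mp (hStm.trace w)
    rw [h1, h2, inner_add_right, inner_add_left,
      ContinuousLinearMap.adjoint_inner_left] at hg
    linear_combination hg
  -- resolvent applied to a solution operator element
  have resid : ∀ μ ∈ res, ∀ z ∈ res,
      (z - μ) • (R z ((S μ f : H))) = ((S z f : H)) - ((S μ f : H)) := by
    intro μ hμ z hz
    have hbc : Γ1 (S z f - S μ f) = B (Γ2 (S z f - S μ f)) := by
      have t1 := (hS z hz).trace f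
      have t2 := (hS μ hμ).trace f
      simp only [map_sub]
      rw [sub_eq_iff_eq_add.mp t1, sub_eq_iff_eq_add.mp t2]
      abel
    have hT : T (S z f - S μ f) - z • (((S z f - S μ f : ↥dT)) : H)
        = (z - μ) • ((S μ f : H)) := by
      rw [map_sub, (hS z hz).in_ker, (hS μ hμ).in_ker]
      push_cast
      module
    have h3 := (hR z hz).left_inv (S z f - S μ f) hbc
    rw [hT, map_smul] at h3
    rw [h3]
    push_cast
    ring
  -- the key algebraic identity on res
  have key : ∀ μ ∈ res, ∀ μt ∈ rest, ∀ z ∈ res,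
      (⟪((St μt w : H)), R z ((S μ f : H))⟫_ℂ) * ((z - μ) * (z - (starRingEnd ℂ) μt))
        = ⟪Γt2 (St μt w), f⟫_ℂ
          - (z - (starRingEnd ℂ) μt) * ⟪((St μt w : H)), ((S μ f : H))⟫_ℂ
          - ⟪w, Γ2 (S z f)⟫_ℂ := by
    intro μ hμ μt hμt z hz
    have er : (z - μ) * ⟪((St μt w : H)), R z ((S μ f : H))⟫_ℂ
        = ⟪((St μt w : H)), ((S z f : H))⟫_ℂ - ⟪((St μt w : H)), ((S μ f : H))⟫_ℂ := by
      rw [← inner_sub_right, ← resid μ hμ z hz, inner_smul_right]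
    have eg := green' μt hμt z hz
    linear_combination (z - (starRingEnd ℂ) μt) * er + eg
  -- half-plane facts
  have hO1 : IsOpen {z : ℂ | 0 < z.im} := isOpen_lt continuous_const Complex.continuous_im
  have hO2 : IsOpen {z : ℂ | z.im < 0} := isOpen_lt Complex.continuous_im continuous_const
  have hs1 : ∀ z ∈ {z : ℂ | 0 < z.im}, (1:ℝ) ≤ ‖z - (-Complex.I)‖ := by
    intro z hz
    have h1 : (z - (-Complex.I)).im = z.im + 1 := by simp
    have h2 : (1:ℝ) ≤ |(z - (-Complex.I)).im| := by
      rw [h1]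
      have : (0:ℝ) < z.im := hz
      rw [abs_of_pos (by linarith)]
      linarith
    exact h2.trans (Complex.abs_im_le_norm _)
  have hs2 : ∀ z ∈ {z : ℂ | z.im < 0}, (1:ℝ) ≤ ‖z - Complex.I‖ := by
    intro z hz
    have h1 : (z - Complex.I).im = z.im - 1 := by simp
    have h2 : (1:ℝ) ≤ |(z - Complex.I).im| := by
      rw [h1]
      have : z.im < (0:ℝ) := hz
      rw [abs_of_neg (by linarith)]
      linarith
    exact h2.trans (Complex.abs_im_le_norm _)
  have htr1 : ∀ z ∈ {z : ℂ | 0 < z.im}, ∀ t : ℝ, z + (t:ℂ) ∈ {z : ℂ | 0 < z.im} := by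
    intro z hz t
    simp only [Set.mem_setOf_eq, Complex.add_im, Complex.ofReal_im, add_zero]
    exact hz
  have htr2 : ∀ z ∈ {z : ℂ | z.im < 0}, ∀ t : ℝ, z + (t:ℂ) ∈ {z : ℂ | z.im < 0} := by
    intro z hz t
    simp only [Set.mem_setOf_eq, Complex.add_im, Complex.ofReal_im, add_zero]
    exact hz
  have hsub1 : {z : ℂ | 0 < z.im} ⊆ res := fun z hz => hallres z (ne_of_gt hz)
  have hsub2 : {z : ℂ | z.im < 0} ⊆ res := fun z hz => hallres z (ne_of_lt hz)
  have transfer : ∀ μ ∈ res, ∀ μt ∈ rest,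
      (NevClass {z : ℂ | 0 < z.im} (fun lam => ⟪w, Γ2 (S lam f)⟫_ℂ)
        ↔ NevClass {z : ℂ | 0 < z.im}
            (fun lam => ⟪((St μt w : H)), R lam ((S μ f : H))⟫_ℂ))
      ∧ (NevClass {z : ℂ | z.im < 0} (fun lam => ⟪w, Γ2 (S lam f)⟫_ℂ)
        ↔ NevClass {z : ℂ | z.im < 0}
            (fun lam => ⟪((St μt w : H)), R lam ((S μ f : H))⟫_ℂ)) := by
    intro μ hμ μt hμt
    constructor
    · exact nev_transfer _ hO1 (-Complex.I) hs1 htr1 μ ((starRingEnd ℂ) μt)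
        (⟪Γt2 (St μt w), f⟫_ℂ) (⟪((St μt w : H)), ((S μ f : H))⟫_ℂ) _ _
        (fun z hz => key μ hμ μt hμt z (hsub1 hz))
    · exact nev_transfer _ hO2 Complex.I hs2 htr2 μ ((starRingEnd ℂ) μt)
        (⟪Γt2 (St μt w), f⟫_ℂ) (⟪((St μt w : H)), ((S μ f : H))⟫_ℂ) _ _
        (fun z hz => key μ hμ μt hμt z (hsub2 hz))
  constructor
  · rintro ⟨hm1, hm2⟩ μ hμ μt hμt
    obtain ⟨t1, t2⟩ := transfer μ hμ μt hμt
    exact ⟨t1.mp hm1, t2.mp hm2⟩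
  · intro hA
    have hI : Complex.I ∈ res := hallres _ (by norm_num)
    have hIt : Complex.I ∈ rest := hallrest _ (by norm_num)
    obtain ⟨hg1, hg2⟩ := hA Complex.I hI Complex.I hIt
    obtain ⟨t1, t2⟩ := transfer Complex.I hI Complex.I hIt
    exact ⟨t1.mpr hg1, t2.mpr hg2⟩
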